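/- Let R : (0, ∞) → ℝ assign to each a > 0 the unique real number r with -1 ≤ r < 0 satisfying r·exp(r) = -a·exp(-a). Then: (R1) for every a > 1, -1 < R(a) < 0, and R is strictly increasing on (1, ∞); (R2) R(1) = -1; (R3) for every k > 0, R(u(k) - k) = k/u(k) - 1, where u(k) is the unique u > 1 with k = u - (ln u)/(1 - 1/u); (R4) for every a > 1, R is differentiable at a with R'(a) = (-R(a)/(R(a) + 1))·((a - 1)/a). -/

import Mathlib

open Real Filter Set
open scoped Topology

lemma phi_strictMono : StrictMonoOn (fun x : ℝ => x * Real.exp x) (Set.Ici (-1)) := by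
  apply strictMonoOn_of_deriv_pos (convex_Ici _)
  · exact (continuous_id.mul Real.continuous_exp).continuousOn
  · intro x hx
    rw [interior_Ici] at hx
    have h : HasDerivAt (fun x : ℝ => x * Real.exp x) (1 * Real.exp x + x * Real.exp x) x :=
      (hasDerivAt_id x).mul (Real.hasDerivAt_exp x)
    rw [h.deriv]
    have hx' : (-1:ℝ) < x := hx
    nlinarith [Real.exp_pos x, mul_pos (by linarith : (0:ℝ) < 1 + x) (Real.exp_pos x)]

lemma psi_strictAnti : StrictAntiOn (fun x : ℝ => x * Real.exp (-x)) (Set.Ici 1) := by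
  apply strictAntiOn_of_deriv_neg (convex_Ici _)
  · exact (continuous_id.mul (Real.continuous_exp.comp continuous_neg)).continuousOn
  · intro x hx
    rw [interior_Ici] at hx
    have h : HasDerivAt (fun x : ℝ => x * Real.exp (-x))
        (1 * Real.exp (-x) + x * (Real.exp (-x) * (-1))) x :=
      (hasDerivAt_id x).mul ((hasDerivAt_id x).neg.exp)
    rw [h.deriv]
    have hx' : (1:ℝ) < x := hx
    nlinarith [mul_pos (by linarith : (0:ℝ) < x - 1) (Real.exp_pos (-x))]

/-- Properties of `R(a) = W(-a·e^{-a})` (the value in `[-1, 0)` with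
`R(a)·e^{R(a)} = -a·e^{-a}`):
(R1) for `a > 1`, `-1 < R(a) < 0`, and `R` is strictly increasing on `(1, ∞)`;
(R2) `R(1) = -1`;
(R3) for `k > 0`, `R(u(k) - k) = k/u(k) - 1`;
(R4) for `a > 1`, `R` is differentiable at `a` with
`R'(a) = (-R(a)/(R(a)+1))·((a-1)/a)`. -/
theorem stmt16 (R : ℝ → ℝ)
    (hR : ∀ a : ℝ, 0 < a →
      -1 ≤ R a ∧ R a < 0 ∧ R a * Real.exp (R a) = -a * Real.exp (-a)) :
    (∀ a : ℝ, 1 < a → -1 < R a ∧ R a < 0) ∧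
    StrictMonoOn R (Set.Ioi 1) ∧
    R 1 = -1 ∧
    (∀ k u : ℝ, 0 < k → 1 < u → k = u - Real.log u / (1 - 1 / u) →
      R (u - k) = k / u - 1) ∧
    (∀ a : ℝ, 1 < a →
      HasDerivAt R ((-R a / (R a + 1)) * ((a - 1) / a)) a) := by
  have hmono := phi_strictMono
  have hanti := psi_strictAnti
  have hR1 : ∀ a : ℝ, 1 < a → -1 < R a ∧ R a < 0 := by
    intro a ha
    obtain ⟨h1, h2, h3⟩ := hR a (by linarith)
    refine ⟨?_, h2⟩
    rcases eq_or_lt_of_le h1 with h | h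
    · exfalso
      have hlt : a * Real.exp (-a) < 1 * Real.exp (-(1:ℝ)) :=
        hanti (mem_Ici.mpr le_rfl) (mem_Ici.mpr ha.le) ha
      rw [← h] at h3
      nlinarith [Real.exp_pos (-a), Real.exp_pos (-(1:ℝ))]
    · exact h
  refine ⟨hR1, ?_, ?_, ?_, ?_⟩
  · -- StrictMonoOn
    intro a ha b hb hab
    simp only [mem_Ioi] at ha hb
    obtain ⟨ha1, ha2, ha3⟩ := hR a (by linarith)
    obtain ⟨hb1, hb2, hb3⟩ := hR b (by linarith)
    have h : b * Real.exp (-b) < a * Real.exp (-a) :=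
      hanti (mem_Ici.mpr ha.le) (mem_Ici.mpr hb.le) hab
    have hφ : R a * Real.exp (R a) < R b * Real.exp (R b) := by rw [ha3, hb3]; linarith
    by_contra hle
    push_neg at hle
    have := hmono.le_iff_le (mem_Ici.mpr hb1) (mem_Ici.mpr ha1) |>.mpr hle
    linarith
  · -- R2
    obtain ⟨h1, h2, h3⟩ := hR 1 one_pos
    apply hmono.injOn (mem_Ici.mpr h1) (mem_Ici.mpr le_rfl)
    show R 1 * Real.exp (R 1) = -1 * Real.exp (-1)
    rw [h3]
  · -- R3
    intro k u hk hu hku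
    have hu0 : (0:ℝ) < u := by linarith
    have hlu : 0 < Real.log u := Real.log_pos hu
    have hden : 0 < 1 - 1/u := by
      have : 1/u < 1 := by rw [div_lt_one hu0]; exact hu
      linarith
    have huk : 0 < u - k := by
      have : u - k = Real.log u / (1 - 1/u) := by linarith
      rw [this]; positivity
    have hkltu : k < u := by linarith
    have hkey : (u - k) * (u - 1) = u * Real.log u := by
      have h1 : u - k = Real.log u / (1 - 1/u) := by linarith
      have hu1 : u - 1 ≠ 0 := by intro h; simp [sub_eq_zero] at h; linarith
      have hne : (1:ℝ) - 1/u ≠ 0 := ne_of_gt hden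
      field_simp at h1
      nlinarith [h1]
    obtain ⟨h1, h2, h3⟩ := hR (u - k) huk
    apply hmono.injOn (mem_Ici.mpr h1)
    · have : (0:ℝ) < k / u := by positivity
      simp only [mem_Ici]; linarith
    · show R (u - k) * Real.exp (R (u - k)) = (k/u - 1) * Real.exp (k/u - 1)
      rw [h3]
      have hexp : Real.exp (k/u - 1) = u * Real.exp (k - u) := by
        have heq : k/u - 1 = Real.log u + (k - u) := by
          field_simp
          nlinarith [hkey]
        rw [heq, Real.exp_add, Real.exp_log hu0]
      rw [hexp, show -(u - k) = k - u by ring]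
      field_simp
  · -- R4
    intro a ha
    obtain ⟨hr1', hr0, hrel⟩ := hR a (by linarith)
    have hr1 : -1 < R a := (hR1 a ha).1
    set r := R a with hrdef
    set φ : ℝ → ℝ := fun x => x * Real.exp x with hφdef
    set ψ : ℝ → ℝ := fun x => -x * Real.exp (-x) with hψdef
    have hφr : HasStrictDerivAt φ (1 * Real.exp r + r * Real.exp r) r :=
      (hasStrictDerivAt_id r).mul (Real.hasStrictDerivAt_exp r)
    have hne : 1 * Real.exp r + r * Real.exp r ≠ 0 := by
      have : 1 * Real.exp r + r * Real.exp r = (1 + r) * Real.exp r := by ring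
      rw [this]
      exact ne_of_gt (mul_pos (by linarith) (Real.exp_pos r))
    set L := hφr.localInverse φ _ r hne with hLdef
    have hF := hφr.hasStrictFDerivAt_equiv hne
    have hL : HasStrictDerivAt L (1 * Real.exp r + r * Real.exp r)⁻¹ (φ r) :=
      hφr.to_localInverse hne
    have hψa : ψ a = φ r := by
      show -a * Real.exp (-a) = r * Real.exp r
      rw [hrel]
    have hψcont : Continuous ψ := by fun_prop
    have hψd : HasDerivAt ψ ((a - 1) * Real.exp (-a)) a := by
      have h : HasDerivAt (fun x : ℝ => -x * Real.exp (-x))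
          (-1 * Real.exp (-a) + -a * (Real.exp (-a) * (-1))) a :=
        ((hasDerivAt_id a).neg.mul ((hasDerivAt_id a).neg.exp))
      convert h using 1
      ring
    have htendψ : Tendsto ψ (𝓝 a) (𝓝 (φ r)) := by
      rw [← hψa]; exact hψcont.continuousAt
    have hLtend : Tendsto L (𝓝 (φ r)) (𝓝 r) := hF.localInverse_tendsto
    have htend : Tendsto (fun x => L (ψ x)) (𝓝 a) (𝓝 r) := hLtend.comp htendψ
    have hev1 : ∀ᶠ x in 𝓝 a, φ (L (ψ x)) = ψ x :=
      htendψ.eventually hF.eventually_right_inverse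
    have hev2 : ∀ᶠ x in 𝓝 a, L (ψ x) ∈ Set.Ioo (-1:ℝ) 0 :=
      htend (Ioo_mem_nhds hr1 hr0)
    have hev3 : ∀ᶠ x in 𝓝 a, 1 < x := eventually_gt_nhds ha
    have heq : R =ᶠ[𝓝 a] fun x => L (ψ x) := by
      filter_upwards [hev1, hev2, hev3] with x h1 h2 h3
      obtain ⟨g1, g2, g3⟩ := hR x (by linarith)
      apply hmono.injOn (mem_Ici.mpr g1) (mem_Ici.mpr h2.1.le)
      show R x * Real.exp (R x) = φ (L (ψ x))
      rw [h1, g3]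
    have hDL : HasDerivAt (fun x => L (ψ x))
        ((1 * Real.exp r + r * Real.exp r)⁻¹ * ((a - 1) * Real.exp (-a))) a := by
      have hL' : HasDerivAt L (1 * Real.exp r + r * Real.exp r)⁻¹ (ψ a) := by
        rw [hψa]; exact hL.hasDerivAt
      exact hL'.comp a hψd
    have hfinal := hDL.congr_of_eventuallyEq heq
    refine hfinal.congr_deriv (Eq.symm ?_)
    have hr0' : r ≠ 0 := ne_of_lt hr0
    have hr1ne : r + 1 ≠ 0 := by linarith
    have ha0 : a ≠ 0 := by linarith
    have hexne : Real.exp r ≠ 0 := ne_of_gt (Real.exp_pos r)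
    rw [inv_mul_eq_div, eq_div_iff hne]
    field_simp
    linear_combination (-(a-1)*(r+1)) * hrel
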